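/- Let Ẽ be a linear functional on polynomials of degree ≤ 2d in x_1,...,x_n satisfying the constraints {x_i² = x_i} and {Σ_i x_i = ω} in the pseudo-expectation sense. Then for all I ⊆ [n] and all m with |I| + m ≤ 2d, Ẽ[ Σ_{J : I⊆J, |J|=|I|+m} x_J ] = C(ω−|I|, m) · Ẽ[x_I], where C(ω−|I|,m) = Π_{x=0}^{m−1}(ω−|I|−x)/m!. -/

import Mathlib

open MvPolynomial

lemma stepA {n d : ℕ} (ω : ℝ)
    (E : MvPolynomial (Fin n) ℝ →ₗ[ℝ] ℝ)
    (hsum : ∀ p : MvPolynomial (Fin n) ℝ, p.totalDegree ≤ 2 * d - 1 →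
      E (p * ((∑ i : Fin n, X i) - C ω)) = 0)
    (hsq : ∀ (p : MvPolynomial (Fin n) ℝ) (i : Fin n),
      p.totalDegree + 2 ≤ 2 * d → E (p * (X i ^ 2 - X i)) = 0)
    (S : Finset (Fin n)) (hS : S.card + 1 ≤ 2 * d) :
    ∑ j ∈ Sᶜ, E (∏ i ∈ insert j S, X i) = (ω - S.card) * E (∏ i ∈ S, X i) := by
  have hdeg : (∏ i ∈ S, X i : MvPolynomial (Fin n) ℝ).totalDegree ≤ S.card := by
    refine le_trans (totalDegree_finset_prod S (fun i => (X i : MvPolynomial (Fin n) ℝ))) ?_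
    simp [totalDegree_X]
  have h0 := hsum (∏ i ∈ S, X i) (by omega)
  have hexp : (∏ i ∈ S, X i) * ((∑ i : Fin n, X i) - C ω) =
      (∑ i : Fin n, (∏ j ∈ S, X j) * X i) - ω • (∏ i ∈ S, X i) := by
    rw [mul_sub, Finset.mul_sum]
    congr 1
    rw [smul_eq_C_mul, mul_comm]
  rw [hexp, map_sub, map_smul, sub_eq_zero, map_sum] at h0
  rw [← Finset.sum_add_sum_compl S] at h0
  have hin : ∀ i ∈ S, E ((∏ j ∈ S, X j) * X i) = E (∏ j ∈ S, X j) := by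
    intro i hi
    have hkey : ((∏ j ∈ S, X j) * X i - (∏ j ∈ S, X j) : MvPolynomial (Fin n) ℝ) =
        (∏ j ∈ S.erase i, X j) * (X i ^ 2 - X i) := by
      rw [← Finset.prod_erase_mul S (fun j => (X j : MvPolynomial (Fin n) ℝ)) hi]
      ring
    have hdeg' : (∏ j ∈ S.erase i, X j : MvPolynomial (Fin n) ℝ).totalDegree + 2 ≤ 2 * d := by
      have : (∏ j ∈ S.erase i, X j : MvPolynomial (Fin n) ℝ).totalDegree ≤ (S.erase i).card := by
        refine le_trans (totalDegree_finset_prod (S.erase i) (fun j => (X j : MvPolynomial (Fin n) ℝ))) ?_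
        simp [totalDegree_X]
      have hc : (S.erase i).card = S.card - 1 := Finset.card_erase_of_mem hi
      have : S.card ≥ 1 := Finset.card_pos.mpr ⟨i, hi⟩
      omega
    have := hsq _ i hdeg'
    rw [← hkey, map_sub, sub_eq_zero] at this
    exact this
  rw [Finset.sum_congr rfl hin, Finset.sum_const, nsmul_eq_mul] at h0
  have hout : ∀ j ∈ Sᶜ, E ((∏ i ∈ S, X i) * X j) = E (∏ i ∈ insert j S, X i) := by
    intro j hj
    rw [Finset.prod_insert (Finset.mem_compl.mp hj), mul_comm]
  rw [Finset.sum_congr rfl hout] at h0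
  rw [smul_eq_mul] at h0
  linear_combination h0

/-- Corollary: under the pseudo-expectation constraints `{x_i² = x_i}` and
`{∑ x_i = ω}`, for all `I` and `m` with `|I| + m ≤ 2d`,
`E[∑_{J ⊇ I, |J| = |I|+m} x_J] = C(ω−|I|, m)·E[x_I]`. -/
theorem pseudoexpectation_extend_many {n d : ℕ} (ω : ℝ)
    (E : MvPolynomial (Fin n) ℝ →ₗ[ℝ] ℝ)
    (hsum : ∀ p : MvPolynomial (Fin n) ℝ, p.totalDegree ≤ 2 * d - 1 →
      E (p * ((∑ i : Fin n, X i) - C ω)) = 0)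
    (hsq : ∀ (p : MvPolynomial (Fin n) ℝ) (i : Fin n),
      p.totalDegree + 2 ≤ 2 * d → E (p * (X i ^ 2 - X i)) = 0)
    (I : Finset (Fin n)) (m : ℕ) (hIm : I.card + m ≤ 2 * d) :
    E (∑ J ∈ (Finset.univ : Finset (Finset (Fin n))).filter
        (fun J => I ⊆ J ∧ J.card = I.card + m), ∏ i ∈ J, X i) =
      ((∏ x ∈ Finset.range m, (ω - (I.card : ℝ) - (x : ℝ))) / (m.factorial : ℝ)) *
        E (∏ i ∈ I, X i) := by
  induction m with
  | zero =>
    have hset : (Finset.univ : Finset (Finset (Fin n))).filter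
        (fun J => I ⊆ J ∧ J.card = I.card) = {I} := by
      ext J
      simp only [Finset.mem_filter, Finset.mem_univ, true_and, Finset.mem_singleton]
      constructor
      · rintro ⟨h1, h2⟩
        exact (Finset.eq_of_subset_of_card_le h1 h2.le).symm
      · rintro rfl
        exact ⟨Finset.Subset.refl _, rfl⟩
    simp [hset]
  | succ m ih =>
    have hrec := ih (by omega)
    set Fm := (Finset.univ : Finset (Finset (Fin n))).filter
        (fun J => I ⊆ J ∧ J.card = I.card + m) with hFm
    set Fm1 := (Finset.univ : Finset (Finset (Fin n))).filter
        (fun J => I ⊆ J ∧ J.card = I.card + (m + 1)) with hFm1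
    have key1 : ∑ J' ∈ Fm, ∑ j ∈ J'ᶜ, E (∏ i ∈ insert j J', X i) =
        (ω - I.card - m) * ∑ J' ∈ Fm, E (∏ i ∈ J', X i) := by
      rw [Finset.mul_sum]
      refine Finset.sum_congr rfl ?_
      intro J' hJ'
      rw [hFm, Finset.mem_filter] at hJ'
      obtain ⟨-, hsub, hcard⟩ := hJ'
      have := stepA ω E hsum hsq J' (by omega)
      rw [this, hcard]
      push_cast
      ring
    have key2 : ∑ J' ∈ Fm, ∑ j ∈ J'ᶜ, E (∏ i ∈ insert j J', X i) =
        ((m : ℝ) + 1) * ∑ J ∈ Fm1, E (∏ i ∈ J, X i) := by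
      rw [Finset.sum_sigma' Fm (fun J' => J'ᶜ) (fun J' j => E (∏ i ∈ insert j J', X i))]
      have reidx : ∑ p ∈ Fm.sigma (fun J' => J'ᶜ), E (∏ i ∈ insert p.2 p.1, X i) =
          ∑ p ∈ Fm1.sigma (fun J => J \ I), E (∏ i ∈ p.1, X i) := by
        refine Finset.sum_nbij' (fun p => ⟨insert p.2 p.1, p.2⟩)
          (fun p => ⟨p.1.erase p.2, p.2⟩) ?_ ?_ ?_ ?_ ?_
        · rintro ⟨J', j⟩ hp
          rw [Finset.mem_sigma, hFm, Finset.mem_filter] at hp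
          obtain ⟨⟨-, hsub, hcard⟩, hj⟩ := hp
          rw [Finset.mem_compl] at hj
          rw [Finset.mem_sigma, hFm1, Finset.mem_filter]
          refine ⟨⟨Finset.mem_univ _, hsub.trans (Finset.subset_insert _ _),
            by rw [Finset.card_insert_of_notMem hj, hcard]; omega⟩, ?_⟩
          rw [Finset.mem_sdiff]
          exact ⟨Finset.mem_insert_self _ _, fun hjI => hj (hsub hjI)⟩
        · rintro ⟨J, j⟩ hp
          rw [Finset.mem_sigma, hFm1, Finset.mem_filter] at hp
          obtain ⟨⟨-, hsub, hcard⟩, hj⟩ := hp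
          rw [Finset.mem_sdiff] at hj
          rw [Finset.mem_sigma, hFm, Finset.mem_filter]
          refine ⟨⟨Finset.mem_univ _, ?_, ?_⟩, ?_⟩
          · intro x hx
            exact Finset.mem_erase.mpr ⟨fun he => hj.2 (he ▸ hx), hsub hx⟩
          · rw [Finset.card_erase_of_mem hj.1, hcard]
            omega
          · simp
        · rintro ⟨J', j⟩ hp
          rw [Finset.mem_sigma, Finset.mem_compl] at hp
          simp [Finset.erase_insert hp.2]
        · rintro ⟨J, j⟩ hp
          rw [Finset.mem_sigma, Finset.mem_sdiff] at hp
          simp [Finset.insert_erase hp.2.1]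
        · rintro ⟨J', j⟩ hp
          rfl
      rw [reidx]
      rw [← Finset.sum_sigma' Fm1 (fun J => J \ I) (fun J _ => E (∏ i ∈ J, X i))]
      rw [Finset.mul_sum]
      refine Finset.sum_congr rfl ?_
      intro J hJ
      rw [hFm1, Finset.mem_filter] at hJ
      obtain ⟨-, hsub, hcard⟩ := hJ
      have hcs : (J \ I).card = m + 1 := by
        rw [Finset.card_sdiff_of_subset hsub, hcard]; omega
      rw [Finset.sum_const, hcs, nsmul_eq_mul]
      push_cast
      ring
    rw [map_sum]
    rw [map_sum] at hrec
    have hm1 : ((m : ℝ) + 1) ≠ 0 := by positivity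
    have : ∑ J ∈ Fm1, E (∏ i ∈ J, X i) =
        (ω - I.card - m) / ((m : ℝ) + 1) * ∑ J' ∈ Fm, E (∏ i ∈ J', X i) := by
      field_simp
      linear_combination key1 - key2
    rw [this, hrec, Finset.prod_range_succ, Nat.factorial_succ]
    push_cast
    field_simp
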